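/- For n ≥ 1, the map (u, s) ↦ [√((1−s)/s) : u₁ : … : uₙ] restricted to S^{4n−1} × (0,1) is a homeomorphism onto the subspace {[Z₀ : … : Zₙ] ∈ ℍPⁿ : Z₀ ≠ 0 and (Z₁, …, Zₙ) ≠ 0} (these conditions are independent of the chosen representative, since right scaling by a nonzero quaternion preserves vanishing of components). -/

import Mathlib

open Matrix

/-- `ℍ` denotes the real quaternions. -/
abbrev HQ : Type := Quaternion ℝ

/-- The nonzero vectors of `Fin (n+1) → ℍ`, with the subspace topology. -/
def PV (n : ℕ) : Type := {Z : Fin (n + 1) → HQ // Z ≠ 0}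

instance (n : ℕ) : TopologicalSpace (PV n) :=
  inferInstanceAs (TopologicalSpace {Z : Fin (n + 1) → HQ // Z ≠ 0})

/-- The relation `Z ∼ Z·q` of componentwise right scalar multiplication by a nonzero
quaternion `q`. -/
def projRel (n : ℕ) (Z W : PV n) : Prop :=
  ∃ q : HQ, q ≠ 0 ∧ W.val = fun i => Z.val i * q

/-- Quaternionic projective space `ℍPⁿ`: the quotient of the nonzero vectors of
`Fin (n+1) → ℍ` by componentwise right multiplication by nonzero quaternions, with the
quotient topology. -/
def HP (n : ℕ) : Type := Quot (projRel n)

instance (n : ℕ) : TopologicalSpace (HP n) :=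
  inferInstanceAs (TopologicalSpace (Quot (projRel n)))

/-- The class `[Z₀ : … : Zₙ] ∈ ℍPⁿ` of a nonzero vector `Z`. -/
def HPmk {n : ℕ} (Z : Fin (n + 1) → HQ) (h : Z ≠ 0) : HP n := Quot.mk _ ⟨Z, h⟩

/-- The unit sphere `S^{4n−1} = {u : Fin n → ℍ | ∑ i, ‖u i‖² = 1} ⊂ ℍⁿ`. -/
def Sph (n : ℕ) : Type := {u : Fin n → HQ // ∑ i, ‖u i‖ ^ 2 = 1}

instance (n : ℕ) : TopologicalSpace (Sph n) :=
  inferInstanceAs (TopologicalSpace {u : Fin n → HQ // ∑ i, ‖u i‖ ^ 2 = 1})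

lemma cons_one_ne_zero {n : ℕ} (w : Fin n → HQ) : (Fin.cons 1 w : Fin (n + 1) → HQ) ≠ 0 := by
  intro h
  have := congrFun h 0
  simp at this

lemma cons_coe_ne_zero {n : ℕ} (u : Fin n → HQ) {c : ℝ} (hc : c ≠ 0) :
    (Fin.cons (c : HQ) u : Fin (n + 1) → HQ) ≠ 0 := by
  intro h
  have := congrFun h 0
  simp only [Fin.cons_zero, Pi.zero_apply] at this
  exact hc (Quaternion.coe_injective (by simpa using this))

lemma cons_zero_ne_zero {n : ℕ} (u : Fin n → HQ) (hu : ∑ i, ‖u i‖ ^ 2 = 1) :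
    (Fin.cons 0 u : Fin (n + 1) → HQ) ≠ 0 := by
  intro h
  have hz : u = 0 := funext fun i => by simpa using congrFun h i.succ
  rw [hz] at hu
  simp at hu

/-- The map `F : S^{4n−1} × [0,1] → ℍPⁿ` given by `F(u, 0) = [1 : 0 : … : 0]`,
`F(u, s) = [√((1−s)/s) : u₁ : … : uₙ]` for `0 < s < 1`, and `F(u, 1) = [0 : u₁ : … : uₙ]`. -/
noncomputable def Fmap (n : ℕ) (u : Sph n) (s : Set.Icc (0 : ℝ) 1) : HP n :=
  if h0 : (s : ℝ) = 0 then HPmk (Fin.cons 1 0) (cons_one_ne_zero 0)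
  else if h1 : (s : ℝ) = 1 then HPmk (Fin.cons 0 u.val) (cons_zero_ne_zero u.val u.prop)
  else HPmk (Fin.cons ((Real.sqrt ((1 - s) / s) : ℝ) : HQ) u.val)
    (cons_coe_ne_zero u.val (ne_of_gt (Real.sqrt_pos.mpr
      (div_pos (by have := s.2.2; cases lt_or_eq_of_le this with
                   | inl h => linarith
                   | inr h => exact absurd h h1)
        (lt_of_le_of_ne s.2.1 (Ne.symm h0))))))

noncomputable section FmapAux

open Set

lemma coeHQ_ne_zero {c : ℝ} (hc : c ≠ 0) : (c : HQ) ≠ 0 := by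
  intro h
  exact hc (by simpa [Quaternion.re_zero] using congrArg QuaternionAlgebra.re h)

variable {n : ℕ}

/-- Euclidean norm of the tail of a vector. -/
def rT (Z : Fin (n + 1) → HQ) : ℝ := Real.sqrt (∑ i : Fin n, ‖Z i.succ‖ ^ 2)

/-- Normalized tail. -/
def gu (Z : Fin (n + 1) → HQ) : Fin n → HQ :=
  fun i => Z i.succ * (Z 0)⁻¹ * ((‖Z 0‖ / rT Z : ℝ) : HQ)

/-- Normalized parameter. -/
def gs (Z : Fin (n + 1) → HQ) : ℝ := rT Z ^ 2 / (rT Z ^ 2 + ‖Z 0‖ ^ 2)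

lemma rT_nonneg (Z : Fin (n + 1) → HQ) : 0 ≤ rT Z := Real.sqrt_nonneg _

lemma rT_sq (Z : Fin (n + 1) → HQ) : rT Z ^ 2 = ∑ i : Fin n, ‖Z i.succ‖ ^ 2 :=
  Real.sq_sqrt (Finset.sum_nonneg fun _ _ => sq_nonneg _)

lemma rT_pos {Z : Fin (n + 1) → HQ} (h : ∃ i : Fin n, Z i.succ ≠ 0) : 0 < rT Z := by
  obtain ⟨i, hi⟩ := h
  apply Real.sqrt_pos.mpr
  apply Finset.sum_pos' (fun j _ => sq_nonneg _)
  exact ⟨i, Finset.mem_univ i, pow_pos (norm_pos_iff.mpr hi) 2⟩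

lemma rT_smul (Z : Fin (n + 1) → HQ) (q : HQ) :
    rT (fun i => Z i * q) = rT Z * ‖q‖ := by
  unfold rT
  rw [← Real.sqrt_sq (norm_nonneg q), ← Real.sqrt_mul (Finset.sum_nonneg fun _ _ => sq_nonneg _)]
  congr 1
  rw [Finset.sum_mul]
  exact Finset.sum_congr rfl fun i _ => by rw [norm_mul, mul_pow]

lemma gu_invariant (Z : Fin (n + 1) → HQ) {q : HQ} (hq : q ≠ 0) :
    gu (fun i => Z i * q) = gu Z := by
  funext i
  unfold gu
  simp only []
  by_cases h0 : Z 0 = 0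
  · simp [h0]
  · rw [_root_.mul_inv_rev, rT_smul, norm_mul,
      mul_div_mul_right _ _ (norm_ne_zero_iff.mpr hq)]
    congr 1
    rw [mul_assoc (Z i.succ), ← mul_assoc q, mul_inv_cancel₀ hq, one_mul]

lemma gs_invariant (Z : Fin (n + 1) → HQ) {q : HQ} (hq : q ≠ 0) :
    gs (fun i => Z i * q) = gs Z := by
  unfold gs
  simp only []
  rw [rT_smul, norm_mul, mul_pow, mul_pow]
  rw [show rT Z ^ 2 * ‖q‖ ^ 2 + ‖Z 0‖ ^ 2 * ‖q‖ ^ 2 = (rT Z ^ 2 + ‖Z 0‖ ^ 2) * ‖q‖ ^ 2 by ring]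
  exact mul_div_mul_right _ _ (pow_ne_zero 2 (norm_ne_zero_iff.mpr hq))

lemma projRel_equivalence (n : ℕ) : Equivalence (projRel n) := by
  constructor
  · exact fun Z => ⟨1, one_ne_zero, by funext i; simp⟩
  · rintro Z W ⟨q, hq, hW⟩
    exact ⟨q⁻¹, inv_ne_zero hq, by
      funext i; simp [hW, mul_assoc, mul_inv_cancel₀ hq]⟩
  · rintro Z W X ⟨q, hq, hW⟩ ⟨p, hp, hX⟩
    exact ⟨q * p, mul_ne_zero hq hp, by funext i; simp [hX, hW, mul_assoc]⟩

lemma rel_of_mk_eq {Z W : PV n} (h : Quot.mk (projRel n) Z = Quot.mk (projRel n) W) :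
    projRel n Z W :=
  ((projRel_equivalence n).eqvGen_iff).mp (Quot.eqvGen_exact h)

lemma good_of_rel {Z W : PV n} (h : projRel n Z W)
    (hZ : Z.val 0 ≠ 0 ∧ ∃ i : Fin n, Z.val i.succ ≠ 0) :
    W.val 0 ≠ 0 ∧ ∃ i : Fin n, W.val i.succ ≠ 0 := by
  obtain ⟨q, hq, hW⟩ := h
  refine ⟨by rw [hW]; exact mul_ne_zero hZ.1 hq, ?_⟩
  obtain ⟨i, hi⟩ := hZ.2
  exact ⟨i, by rw [hW]; exact mul_ne_zero hi hq⟩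

lemma sum_gu {Z : Fin (n + 1) → HQ} (h0 : Z 0 ≠ 0) (ht : ∃ i : Fin n, Z i.succ ≠ 0) :
    ∑ i, ‖gu Z i‖ ^ 2 = 1 := by
  have hr := rT_pos ht
  have ha : (0 : ℝ) < ‖Z 0‖ := norm_pos_iff.mpr h0
  have key : ∀ i : Fin n, ‖gu Z i‖ ^ 2 = ‖Z i.succ‖ ^ 2 / rT Z ^ 2 := by
    intro i
    unfold gu
    rw [norm_mul, norm_mul, norm_inv, Quaternion.norm_coe, Real.norm_eq_abs,
      abs_of_nonneg (by positivity)]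
    field_simp
  rw [Finset.sum_congr rfl fun i _ => key i, ← Finset.sum_div, ← rT_sq,
    div_self (by positivity)]

lemma gs_mem {Z : Fin (n + 1) → HQ} (h0 : Z 0 ≠ 0) (ht : ∃ i : Fin n, Z i.succ ≠ 0) :
    gs Z ∈ Set.Ioo (0 : ℝ) 1 := by
  have hr := rT_pos ht
  have ha : (0 : ℝ) < ‖Z 0‖ := norm_pos_iff.mpr h0
  constructor
  · unfold gs; positivity
  · unfold gs
    rw [div_lt_one (by positivity)]
    nlinarith

def g0 (Z : PV n) : (Fin n → HQ) × ℝ := (gu Z.val, gs Z.val)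

lemma g0_invariant : ∀ Z W : PV n, projRel n Z W → g0 Z = g0 W := by
  rintro Z W ⟨q, hq, hW⟩
  unfold g0
  rw [hW, gu_invariant _ hq, gs_invariant _ hq]

/-- The subspace of `ℍPⁿ` appearing in the theorem. -/
abbrev SS (n : ℕ) : Type :=
  {x : HP n // ∃ Z : PV n, Quot.mk _ Z = x ∧
    Z.val 0 ≠ 0 ∧ ∃ i : Fin n, Z.val i.succ ≠ 0}

lemma continuous_lift_subtype {X T : Type*} [TopologicalSpace X] [TopologicalSpace T]
    {r : X → X → Prop} {P : Quot r → Prop} {g : X → T}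
    (hinv : ∀ a b, r a b → g a = g b)
    (hopen : IsOpen {z : X | P (Quot.mk r z)})
    (hcont : ContinuousOn g {z : X | P (Quot.mk r z)}) :
    Continuous fun x : {x : Quot r // P x} => Quot.lift g hinv x.val := by
  rw [continuous_def]
  intro V hV
  have he : (fun x : {x : Quot r // P x} => Quot.lift g hinv x.val) ⁻¹' V
      = Subtype.val ⁻¹' {y : Quot r | P y ∧ Quot.lift g hinv y ∈ V} := by
    ext x
    simp [x.prop]
  rw [he]
  refine IsOpen.preimage continuous_subtype_val ?_
  rw [← isQuotientMap_quot_mk.isOpen_preimage]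
  have h2 : Quot.mk r ⁻¹' {y : Quot r | P y ∧ Quot.lift g hinv y ∈ V}
      = {z : X | P (Quot.mk r z)} ∩ g ⁻¹' V := rfl
  rw [h2]
  exact hcont.isOpen_inter_preimage hopen hV

lemma U_eq (n : ℕ) :
    {Z : PV n | ∃ W : PV n, Quot.mk (projRel n) W = Quot.mk (projRel n) Z ∧
        W.val 0 ≠ 0 ∧ ∃ i : Fin n, W.val i.succ ≠ 0}
      = {Z : PV n | Z.val 0 ≠ 0 ∧ ∃ i : Fin n, Z.val i.succ ≠ 0} := by
  ext Z
  constructor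
  · rintro ⟨W, hWZ, hW⟩
    exact good_of_rel (rel_of_mk_eq hWZ) hW
  · intro h
    exact ⟨Z, rfl, h⟩

lemma U_open (n : ℕ) :
    IsOpen {Z : PV n | Z.val 0 ≠ 0 ∧ ∃ i : Fin n, Z.val i.succ ≠ 0} := by
  have hsplit : {Z : PV n | Z.val 0 ≠ 0 ∧ ∃ i : Fin n, Z.val i.succ ≠ 0}
      = {Z : PV n | Z.val 0 ≠ 0} ∩ {Z : PV n | ∃ i : Fin n, Z.val i.succ ≠ 0} := rfl
  rw [hsplit]
  apply IsOpen.inter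
  · exact IsOpen.preimage ((continuous_apply (0 : Fin (n+1))).comp continuous_subtype_val)
      isOpen_compl_singleton
  · have he : {Z : PV n | ∃ i : Fin n, Z.val i.succ ≠ 0}
        = ⋃ i : Fin n, {Z : PV n | Z.val i.succ ≠ 0} := by
      ext Z; simp
    rw [he]
    exact isOpen_iUnion fun i => IsOpen.preimage
      ((continuous_apply (Fin.succ i)).comp continuous_subtype_val) isOpen_compl_singleton

lemma g0_contOn (n : ℕ) :
    ContinuousOn (g0 (n := n)) {Z : PV n | Z.val 0 ≠ 0 ∧ ∃ i : Fin n, Z.val i.succ ≠ 0} := by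
  set U := {Z : PV n | Z.val 0 ≠ 0 ∧ ∃ i : Fin n, Z.val i.succ ≠ 0} with hU
  have h0 : Continuous fun Z : PV n => Z.val 0 :=
    (continuous_apply (0 : Fin (n+1))).comp continuous_subtype_val
  have hsucc : ∀ i : Fin n, Continuous fun Z : PV n => Z.val i.succ := fun i =>
    (continuous_apply (Fin.succ i)).comp continuous_subtype_val
  have hrT : Continuous fun Z : PV n => rT Z.val := by
    unfold rT
    exact Real.continuous_sqrt.comp
      (continuous_finset_sum _ fun i _ => ((hsucc i).norm.pow 2))
  have hrT_ne : ∀ Z ∈ U, rT Z.val ≠ 0 := fun Z hZ => (rT_pos hZ.2).ne'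
  have h0ne : ∀ Z ∈ U, Z.val 0 ≠ 0 := fun Z hZ => hZ.1
  apply ContinuousOn.prodMk
  · apply continuousOn_pi.mpr
    intro i
    refine ContinuousOn.mul (ContinuousOn.mul (hsucc i).continuousOn ?_) ?_
    · exact ContinuousOn.inv₀ h0.continuousOn h0ne
    · exact Quaternion.continuous_coe.comp_continuousOn
        (ContinuousOn.div h0.norm.continuousOn hrT.continuousOn hrT_ne)
  · refine ContinuousOn.div ((hrT.pow 2).continuousOn) ?_ ?_
    · exact ((hrT.pow 2).add (h0.norm.pow 2)).continuousOn
    · intro Z hZ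
      have hr := rT_pos hZ.2
      have ha : (0 : ℝ) < ‖Z.val 0‖ := norm_pos_iff.mpr hZ.1
      positivity

def cmap (s : Set.Ioo (0 : ℝ) 1) : ℝ := Real.sqrt ((1 - s) / s)

lemma cmap_pos (s : Set.Ioo (0 : ℝ) 1) : 0 < cmap s :=
  Real.sqrt_pos.mpr (div_pos (by linarith [s.2.2]) s.2.1)

lemma sph_exists {n : ℕ} (u : Sph n) : ∃ i : Fin n, u.val i ≠ 0 := by
  by_contra h
  push_neg at h
  have h2 : ∑ i, ‖u.val i‖ ^ 2 = 0 := Finset.sum_eq_zero fun i _ => by rw [h i]; simp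
  rw [u.prop] at h2
  norm_num at h2

def fwdPV {n : ℕ} (p : Sph n × Set.Ioo (0 : ℝ) 1) : PV n :=
  ⟨Fin.cons ((cmap p.2 : ℝ) : HQ) p.1.val, cons_coe_ne_zero _ (cmap_pos p.2).ne'⟩

def fwd {n : ℕ} (p : Sph n × Set.Ioo (0 : ℝ) 1) : SS n :=
  ⟨Quot.mk _ (fwdPV p), fwdPV p, rfl,
    by
      show (Fin.cons ((cmap p.2 : ℝ) : HQ) p.1.val : Fin (n+1) → HQ) 0 ≠ 0
      rw [Fin.cons_zero]
      exact coeHQ_ne_zero (cmap_pos p.2).ne',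
    by
      obtain ⟨i, hi⟩ := sph_exists p.1
      refine ⟨i, ?_⟩
      show (Fin.cons ((cmap p.2 : ℝ) : HQ) p.1.val : Fin (n+1) → HQ) i.succ ≠ 0
      rw [Fin.cons_succ]
      exact hi⟩

lemma fwd_continuous (n : ℕ) : Continuous (fwd (n := n)) := by
  apply Continuous.subtype_mk
  apply continuous_quot_mk.comp
  apply Continuous.subtype_mk
  apply continuous_pi
  intro i
  induction i using Fin.cases with
  | zero =>
    simp only [fwdPV, Fin.cons_zero]
    apply Quaternion.continuous_coe.comp
    apply Real.continuous_sqrt.comp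
    have h2 : Continuous fun p : Sph n × Set.Ioo (0 : ℝ) 1 => (p.2 : ℝ) :=
      continuous_subtype_val.comp continuous_snd
    exact Continuous.div (continuous_const.sub h2) h2 fun p => (p.2.2.1).ne'
  | succ j =>
    simp only [fwdPV, Fin.cons_succ]
    exact (continuous_apply j).comp (continuous_subtype_val.comp continuous_fst)

def glob {n : ℕ} : HP n → (Fin n → HQ) × ℝ := Quot.lift g0 g0_invariant

lemma glob_spec {n : ℕ} (x : SS n) :
    (∑ i, ‖(glob x.val).1 i‖ ^ 2 = 1) ∧ (glob x.val).2 ∈ Set.Ioo (0 : ℝ) 1 := by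
  obtain ⟨Z, hZ, h0, ht⟩ := x.prop
  have hg : glob x.val = g0 Z := by rw [← hZ]; rfl
  rw [hg]
  exact ⟨sum_gu h0 ht, gs_mem h0 ht⟩

def bwd {n : ℕ} (x : SS n) : Sph n × Set.Ioo (0 : ℝ) 1 :=
  ⟨⟨(glob x.val).1, (glob_spec x).1⟩, ⟨(glob x.val).2, (glob_spec x).2⟩⟩

lemma bwd_continuous (n : ℕ) : Continuous (bwd (n := n)) := by
  have hg : Continuous fun x : SS n => glob x.val := by
    have := continuous_lift_subtype (r := projRel n)
      (P := fun x => ∃ Z : PV n, Quot.mk _ Z = x ∧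
        Z.val 0 ≠ 0 ∧ ∃ i : Fin n, Z.val i.succ ≠ 0)
      (g := g0) g0_invariant (by rw [show {z : PV n | _} = _ from U_eq n]; exact U_open n)
      (by rw [show {z : PV n | _} = _ from U_eq n]; exact g0_contOn n)
    exact this
  exact Continuous.prodMk (Continuous.subtype_mk hg.fst _) (Continuous.subtype_mk hg.snd _)

lemma gu_cons {n : ℕ} (u : Sph n) {c : ℝ} (hc : 0 < c) :
    gu (Fin.cons (c : HQ) u.val) = u.val := by
  funext i
  unfold gu rT
  simp only [Fin.cons_succ, Fin.cons_zero]
  rw [u.prop, Real.sqrt_one, div_one, Quaternion.norm_coe, Real.norm_eq_abs, abs_of_pos hc]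
  rw [mul_assoc, inv_mul_cancel₀ (coeHQ_ne_zero hc.ne'), mul_one]

lemma gs_cons {n : ℕ} (u : Sph n) (s : Set.Ioo (0 : ℝ) 1) :
    gs (Fin.cons ((cmap s : ℝ) : HQ) u.val) = s := by
  have hs0 : (0 : ℝ) < s := s.2.1
  have hs1 : (s : ℝ) < 1 := s.2.2
  unfold gs rT cmap
  simp only [Fin.cons_succ, Fin.cons_zero]
  rw [u.prop, Real.sqrt_one, one_pow, Quaternion.norm_coe, Real.norm_eq_abs, sq_abs,
    Real.sq_sqrt (le_of_lt (div_pos (by linarith) hs0))]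
  field_simp
  ring

lemma left_inv (n : ℕ) : Function.LeftInverse (bwd (n := n)) (fwd (n := n)) := by
  rintro ⟨u, s⟩
  have hg : glob (fwd (u, s)).val = g0 (fwdPV (u, s)) := rfl
  apply Prod.ext
  · apply Subtype.ext
    show (glob (fwd (u, s)).val).1 = u.val
    rw [hg]
    exact gu_cons u (cmap_pos s)
  · apply Subtype.ext
    show (glob (fwd (u, s)).val).2 = (s : ℝ)
    rw [hg]
    exact gs_cons u s

lemma cmap_gs {n : ℕ} {Z : Fin (n + 1) → HQ} (h0 : Z 0 ≠ 0) (ht : ∃ i : Fin n, Z i.succ ≠ 0) :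
    Real.sqrt ((1 - gs Z) / gs Z) = ‖Z 0‖ / rT Z := by
  have hr := rT_pos ht
  have ha : (0 : ℝ) < ‖Z 0‖ := norm_pos_iff.mpr h0
  have key : (1 - gs Z) / gs Z = (‖Z 0‖ / rT Z) ^ 2 := by
    unfold gs
    have hd : (0 : ℝ) < rT Z ^ 2 + ‖Z 0‖ ^ 2 := by positivity
    field_simp
    ring
  rw [key, Real.sqrt_sq (by positivity)]

lemma right_inv (n : ℕ) : Function.RightInverse (bwd (n := n)) (fwd (n := n)) := by
  intro x
  obtain ⟨Z, hZ, h0, ht⟩ := x.prop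
  have hr := rT_pos ht
  have ha : (0 : ℝ) < ‖Z.val 0‖ := norm_pos_iff.mpr h0
  have hg : glob x.val = g0 Z := by rw [← hZ]; rfl
  apply Subtype.ext
  show Quot.mk _ (fwdPV (bwd x)) = x.val
  rw [← hZ]
  refine (Quot.sound ?_).symm
  set t : ℝ := ‖Z.val 0‖ / rT Z.val with htdef
  have htpos : 0 < t := by positivity
  refine ⟨(Z.val 0)⁻¹ * (t : HQ), mul_ne_zero (inv_ne_zero h0) (coeHQ_ne_zero htpos.ne'), ?_⟩
  have hcmap : cmap (bwd x).2 = t := by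
    have h2 : ((bwd x).2 : ℝ) = gs Z.val := by
      show (glob x.val).2 = gs Z.val
      rw [hg]; rfl
    unfold cmap
    rw [h2]
    exact cmap_gs h0 ht
  have hu : (bwd x).1.val = gu Z.val := by
    show (glob x.val).1 = gu Z.val
    rw [hg]; rfl
  show (fwdPV (bwd x)).val = fun i => Z.val i * ((Z.val 0)⁻¹ * (t : HQ))
  funext i
  show (Fin.cons ((cmap (bwd x).2 : ℝ) : HQ) (bwd x).1.val : Fin (n+1) → HQ) i
      = Z.val i * ((Z.val 0)⁻¹ * (t : HQ))
  induction i using Fin.cases with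
  | zero =>
    rw [Fin.cons_zero, hcmap, ← mul_assoc, mul_inv_cancel₀ h0, one_mul]
  | succ j =>
    rw [Fin.cons_succ, hu]
    unfold gu
    rw [mul_assoc]


end FmapAux

/-- For `n ≥ 1`, the map `(u, s) ↦ [√((1−s)/s) : u₁ : … : uₙ]` restricted to
`S^{4n−1} × (0,1)` is a homeomorphism onto the subspace of `ℍPⁿ` of classes
`[Z₀ : … : Zₙ]` with `Z₀ ≠ 0` and `(Z₁, …, Zₙ) ≠ 0` (conditions independent of the
chosen representative, since right scaling by a nonzero quaternion preserves vanishing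
of components). -/
theorem fmap_middle_homeo (n : ℕ) (hn : 1 ≤ n) :
    ∃ h : (Sph n × (Set.Ioo (0 : ℝ) 1)) ≃ₜ
        {x : HP n // ∃ Z : PV n, Quot.mk _ Z = x ∧
          Z.val 0 ≠ 0 ∧ ∃ i : Fin n, Z.val i.succ ≠ 0},
      ∀ (u : Sph n) (s : Set.Ioo (0 : ℝ) 1),
        (h (u, s) : HP n) =
          HPmk (Fin.cons ((Real.sqrt ((1 - s) / s) : ℝ) : HQ) u.val)
            (cons_coe_ne_zero u.val (ne_of_gt (Real.sqrt_pos.mpr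
              (div_pos (by linarith [s.2.2]) s.2.1)))) := by
  
  refine ⟨⟨⟨fwd, bwd, left_inv n, right_inv n⟩, fwd_continuous n, bwd_continuous n⟩, ?_⟩
  intro u s
  rfl
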